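/- arXiv:1702.07974 — 2 statements merged into one kernel-verified Lean document; each statement's English description precedes it below -/
import Mathlib

section
/- Let H : I → ℂ^{m×m} be a C^1 family of complex symmetric matrices solving the matrix Riccati equation Ḣ(t) + H(t)² = F(t) on an interval I, where F(t) is real symmetric. Then det(Im H(t)) = det(Im H(t₀)) · e^{-2 ∫_{t₀}^t tr(Re H(s)) ds} for all t, t₀ ∈ I. -/
open Matrix Finset

lemma jacobi_aux {m : ℕ} {Y : ℝ → Matrix (Fin m) (Fin m) ℝ} {M : Matrix (Fin m) (Fin m) ℝ}
    {s : Set ℝ} {x : ℝ}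
    (h : ∀ i j, HasDerivWithinAt (fun t => Y t i j) (M i j) s x) :
    HasDerivWithinAt (fun t => (Y t).det) (((Y x).adjugate * M).trace) s x := by
  have h1 : HasDerivWithinAt
      (fun t => ∑ σ : Equiv.Perm (Fin m), ((Equiv.Perm.sign σ : ℤ) : ℝ) * ∏ i, Y t (σ i) i)
      (∑ σ : Equiv.Perm (Fin m), ((Equiv.Perm.sign σ : ℤ) : ℝ) *
        ∑ i, (∏ j ∈ Finset.univ.erase i, Y x (σ j) j) • M (σ i) i) s x :=
    HasDerivWithinAt.fun_sum fun σ _ =>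
      (HasDerivWithinAt.fun_finsetProd fun i _ => h (σ i) i).const_mul _
  have hfun : (fun t => (Y t).det) =
      fun t => ∑ σ : Equiv.Perm (Fin m), ((Equiv.Perm.sign σ : ℤ) : ℝ) * ∏ i, Y t (σ i) i := by
    funext t; rw [Matrix.det_apply']
  rw [hfun]
  convert h1 using 1
  -- combinatorial identity
  have key : ∀ i : Fin m,
      (∑ σ : Equiv.Perm (Fin m), ((Equiv.Perm.sign σ : ℤ) : ℝ) *
        ((∏ j ∈ Finset.univ.erase i, Y x (σ j) j) * M (σ i) i))
      = ((Y x).updateCol i (fun r => M r i)).det := by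
    intro i
    rw [Matrix.det_apply']
    refine Finset.sum_congr rfl fun σ _ => ?_
    rw [← Finset.mul_prod_erase _ _ (Finset.mem_univ i), Matrix.updateCol_self]
    rw [Finset.prod_congr rfl fun j hj =>
      Matrix.updateCol_ne (i := σ j) (Finset.ne_of_mem_erase hj)]
    ring
  calc ((Y x).adjugate * M).trace
      = ∑ i, ∑ j, (Y x).adjugate i j * M j i := by
        simp [Matrix.trace, Matrix.diag, Matrix.mul_apply]
    _ = ∑ i, ((Y x).updateCol i (fun r => M r i)).det := by
        refine Finset.sum_congr rfl fun i _ => ?_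
        rw [← Matrix.cramer_apply, Matrix.cramer_eq_adjugate_mulVec]
        simp [Matrix.mulVec, dotProduct]
    _ = ∑ σ : Equiv.Perm (Fin m), ((Equiv.Perm.sign σ : ℤ) : ℝ) *
        ∑ i, (∏ j ∈ Finset.univ.erase i, Y x (σ j) j) • M (σ i) i := by
        simp only [← key, smul_eq_mul, Finset.mul_sum]
        rw [Finset.sum_comm]

/-- For a `C¹` family of complex symmetric matrices solving the matrix Riccati equation
`Ḣ + H² = F` with `F` real symmetric and `Im H(t₀)` positive definite, one has
`det(Im H(t)) = det(Im H(t₀)) e^{-2∫_{t₀}^t tr(Re H(s)) ds}`. -/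
theorem stmt7 (m : ℕ) (I : Set ℝ) (hI : I.OrdConnected)
    (H H' : ℝ → Matrix (Fin m) (Fin m) ℂ)
    (F : ℝ → Matrix (Fin m) (Fin m) ℝ)
    (hderiv : ∀ t ∈ I, ∀ i j, HasDerivAt (fun s => H s i j) (H' t i j) t)
    (hcont : ∀ i j, ContinuousOn (fun s => H' s i j) I)
    (hric : ∀ t ∈ I, H' t + H t * H t = (F t).map (fun a => (a : ℂ)))
    (hFsymm : ∀ t ∈ I, (F t).IsSymm)
    (hHsymm : ∀ t ∈ I, (H t).IsSymm)
    (t₀ : ℝ) (ht₀ : t₀ ∈ I)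
    (hpos : ((H t₀).map Complex.im).PosDef)
    (t : ℝ) (ht : t ∈ I) :
    ((H t).map Complex.im).det =
      ((H t₀).map Complex.im).det *
        Real.exp (-2 * ∫ s in t₀..t, ((H s).trace).re) := by
  set Y : ℝ → Matrix (Fin m) (Fin m) ℝ := fun u => (H u).map Complex.im with hY
  set X : ℝ → Matrix (Fin m) (Fin m) ℝ := fun u => (H u).map Complex.re with hX
  set f : ℝ → ℝ := fun u => ((H u).trace).re with hf
  -- continuity of f on I
  have hHc : ∀ i j, ContinuousOn (fun s => H s i j) I := fun i j u hu =>
    ((hderiv u hu i j).continuousAt).continuousWithinAt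
  have hfc : ContinuousOn f I := by
    have h1 : ContinuousOn (fun s => (H s).trace) I := by
      simp only [Matrix.trace, Matrix.diag]
      exact continuousOn_finset_sum _ fun i _ => hHc i i
    exact Complex.continuous_re.comp_continuousOn h1
  set J : Set ℝ := Set.uIcc t₀ t with hJ
  have hJI : J ⊆ I := hI.uIcc_subset ht₀ ht
  set g : ℝ → ℝ := fun u => (Y u).det * Real.exp (2 * ∫ s in t₀..u, f s) with hg
  have trX : ∀ u, (X u).trace = f u := by
    intro u
    simp [hX, hf, Matrix.trace, Matrix.diag, Matrix.map_apply, Complex.re_sum]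
  have hgderiv : ∀ x ∈ J, HasDerivWithinAt g 0 J x := by
    intro x hx
    haveI : Fact (x ∈ Set.uIcc t₀ t) := ⟨hx⟩
    have hxI : x ∈ I := hJI hx
    -- FTC part
    have hsub : Set.uIcc t₀ x ⊆ J := Set.uIcc_subset_uIcc Set.left_mem_uIcc hx
    have hint : IntervalIntegrable f MeasureTheory.volume t₀ x :=
      (hfc.mono (hsub.trans hJI)).intervalIntegrable
    have hmeas : StronglyMeasurableAtFilter f (nhdsWithin x J) :=
      (hfc.mono hJI).stronglyMeasurableAtFilter_nhdsWithin measurableSet_uIcc x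
    have hB : HasDerivWithinAt (fun u => ∫ s in t₀..u, f s) (f x) J x :=
      intervalIntegral.integral_hasDerivWithinAt_right hint hmeas ((hfc.mono hJI) x hx)
    -- derivative of entries of Y
    have hYd : ∀ i j, HasDerivWithinAt (fun u => Y u i j) ((-(X x * Y x + Y x * X x)) i j) J x := by
      intro i j
      have h1 : HasDerivAt (fun u => H u i j) (H' x i j) x := hderiv x hxI i j
      have h2 : HasDerivAt (fun u => (H u i j).im) ((H' x i j).im) x := by
        have := (Complex.imCLM.hasFDerivAt.comp x h1.hasFDerivAt).hasDerivAt
        simpa [Function.comp_def] using this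
      have h3 : H' x i j = ((F x).map (fun a => (a : ℂ))) i j - (H x * H x) i j := by
        have h4 := hric x hxI
        have h5 : (H' x + H x * H x) i j = ((F x).map (fun a => (a : ℂ))) i j := by rw [h4]
        simp only [Matrix.add_apply] at h5
        linear_combination h5
      have h6 : (H' x i j).im = (-(X x * Y x + Y x * X x)) i j := by
        rw [h3]
        simp [Matrix.mul_apply, Matrix.map_apply, Complex.mul_im, Complex.im_sum,
          Finset.sum_add_distrib, hX, hY]
      exact (h6 ▸ h2).hasDerivWithinAt
    have hdet : HasDerivWithinAt (fun u => (Y u).det) (-(2 * f x * (Y x).det)) J x := by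
      have hJac := jacobi_aux hYd
      have htr : ((Y x).adjugate * (-(X x * Y x + Y x * X x))).trace
          = -(2 * f x * (Y x).det) := by
        rw [Matrix.mul_neg, Matrix.trace_neg, Matrix.mul_add, Matrix.trace_add]
        rw [← Matrix.mul_assoc, Matrix.trace_mul_cycle ((Y x).adjugate) (X x) (Y x),
          ← Matrix.mul_assoc, Matrix.mul_adjugate, Matrix.adjugate_mul]
        simp only [Matrix.smul_mul, Matrix.one_mul, Matrix.trace_smul, trX, smul_eq_mul]
        ring
      rw [← htr]; exact hJac
    have hexp : HasDerivWithinAt (fun u => Real.exp (2 * ∫ s in t₀..u, f s))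
        (Real.exp (2 * ∫ s in t₀..x, f s) * (2 * f x)) J x := (hB.const_mul 2).exp
    have := hdet.fun_mul hexp
    refine this.congr_deriv ?_
    ring
  have hconst : ‖g t - g t₀‖ ≤ 0 * ‖t - t₀‖ := by
    have hconv : Convex ℝ J := (Set.ordConnected_uIcc).convex
    refine hconv.norm_image_sub_le_of_norm_hasDerivWithin_le
      (f' := fun _ => (0 : ℝ)) (fun x hx => hgderiv x hx) (fun x _ => by simp)
      Set.left_mem_uIcc Set.right_mem_uIcc
  have hgt : g t = g t₀ := by
    have : ‖g t - g t₀‖ ≤ 0 := by simpa using hconst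
    have h0 : g t - g t₀ = 0 := norm_le_zero_iff.mp this
    linarith
  have hgt₀ : g t₀ = (Y t₀).det := by
    simp [hg, intervalIntegral.integral_same]
  set c : ℝ := ∫ s in t₀..t, f s with hc
  have hgtv : (Y t).det * Real.exp (2 * c) = (Y t₀).det := by
    rw [← hgt₀, ← hgt]
  have hne : Real.exp (2 * c) ≠ 0 := Real.exp_ne_zero _
  have : (Y t).det = (Y t₀).det * Real.exp (-2 * c) := by
    rw [← hgtv]
    rw [mul_assoc, ← Real.exp_add]
    ring_nf
    simp
  simpa [hY, hc, hf] using this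
end

section
/- Let H : I → ℂ^{m×m} solve the matrix Riccati equation Ḣ(t) + H(t)² = F(t) with F(t) real symmetric, H(t) complex symmetric, and Im H(t₀) positive definite. Then Im H(t) is positive definite for all t ∈ I. -/
open Matrix Finset

variable {m : ℕ}



/-- Expansion of the determinant of a row update in terms of the adjugate. -/
private lemma det_updateRow_eq_sum (A : Matrix (Fin m) (Fin m) ℝ) (i : Fin m) (b : Fin m → ℝ) :
    (A.updateRow i b).det = ∑ k, b k * adjugate A k i := by
  rw [Matrix.det_eq_sum_mul_adjugate_row (A.updateRow i b) i]
  refine Finset.sum_congr rfl fun k _ => ?_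
  have h1 : (A.updateRow i b) i k = b k := by rw [Matrix.updateRow_self]
  have h2 : (A.updateRow i b).updateRow i (Pi.single k 1) = A.updateRow i (Pi.single k 1) := by
    ext i' j'
    by_cases hii : i' = i <;> simp [Matrix.updateRow_apply, hii]
  rw [h1, Matrix.adjugate_apply, Matrix.adjugate_apply, h2]

/-- Jacobi's formula along a path. -/
private lemma hasDerivAt_det (A : ℝ → Matrix (Fin m) (Fin m) ℝ)
    (A' : Matrix (Fin m) (Fin m) ℝ) (t : ℝ)
    (h : ∀ i j, HasDerivAt (fun s => A s i j) (A' i j) t) :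
    HasDerivAt (fun s => (A s).det) ((A' * (A t).adjugate).trace) t := by
  have hdet : ∀ s, (A s).det =
      ∑ σ : Equiv.Perm (Fin m), ((Equiv.Perm.sign σ : ℤ) : ℝ) * ∏ i, A s (σ i) i := by
    intro s
    rw [Matrix.det_apply]
    exact Finset.sum_congr rfl fun σ _ => by simp [Units.smul_def, zsmul_eq_mul]
  have key : HasDerivAt (fun s => ∑ σ : Equiv.Perm (Fin m),
      ((Equiv.Perm.sign σ : ℤ) : ℝ) * ∏ i, A s (σ i) i)
      (∑ σ : Equiv.Perm (Fin m), ((Equiv.Perm.sign σ : ℤ) : ℝ) *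
        ∑ i, (∏ j ∈ Finset.univ.erase i, A t (σ j) j) • A' (σ i) i) t := by
    refine HasDerivAt.fun_sum fun σ _ => ?_
    exact (HasDerivAt.fun_finsetProd fun i _ => h (σ i) i).const_mul _
  have heq : (∑ σ : Equiv.Perm (Fin m), ((Equiv.Perm.sign σ : ℤ) : ℝ) *
        ∑ i, (∏ j ∈ Finset.univ.erase i, A t (σ j) j) • A' (σ i) i)
      = (A' * (A t).adjugate).trace := by
    have htr : (A' * (A t).adjugate).trace = ∑ i, ((A t).updateRow i (A' i)).det := by
      rw [Matrix.trace]
      refine Finset.sum_congr rfl fun i _ => ?_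
      rw [det_updateRow_eq_sum, Matrix.diag_apply, Matrix.mul_apply]
    rw [htr]
    have hrow : ∀ i : Fin m, ((A t).updateRow i (A' i)).det =
        ∑ σ : Equiv.Perm (Fin m), ((Equiv.Perm.sign σ : ℤ) : ℝ) *
          ∏ j, ((A t).updateRow i (A' i)) (σ j) j := by
      intro i
      rw [Matrix.det_apply]
      exact Finset.sum_congr rfl fun σ _ => by simp [Units.smul_def, zsmul_eq_mul]
    simp_rw [hrow]
    rw [Finset.sum_comm]
    refine Finset.sum_congr rfl fun σ _ => ?_
    rw [Finset.mul_sum]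
    refine Fintype.sum_equiv σ _ _ fun i => ?_
    congr 1
    have hsplit : ∏ j, ((A t).updateRow (σ i) (A' (σ i))) (σ j) j
        = ((A t).updateRow (σ i) (A' (σ i))) (σ i) i *
          ∏ j ∈ Finset.univ.erase i, ((A t).updateRow (σ i) (A' (σ i))) (σ j) j :=
      (Finset.mul_prod_erase Finset.univ _ (Finset.mem_univ i)).symm
    rw [hsplit]
    have h1 : ((A t).updateRow (σ i) (A' (σ i))) (σ i) i = A' (σ i) i := by
      rw [Matrix.updateRow_self]
    have h2 : ∏ j ∈ Finset.univ.erase i, ((A t).updateRow (σ i) (A' (σ i))) (σ j) j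
        = ∏ j ∈ Finset.univ.erase i, A t (σ j) j := by
      refine Finset.prod_congr rfl fun j hj => ?_
      have : σ j ≠ σ i := fun hc => (Finset.mem_erase.mp hj).1 (σ.injective hc)
      rw [Matrix.updateRow_ne this]
    rw [h1, h2, smul_eq_mul]
    ring
  have key2 : HasDerivAt (fun s => (A s).det)
      (∑ σ : Equiv.Perm (Fin m), ((Equiv.Perm.sign σ : ℤ) : ℝ) *
        ∑ i, (∏ j ∈ Finset.univ.erase i, A t (σ j) j) • A' (σ i) i) t := by
    simpa only [← hdet] using key
  exact heq ▸ key2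



private lemma quad_coeff_zero {a b : ℝ} (h : ∀ t : ℝ, 0 ≤ a * t + b * t ^ 2) : a = 0 := by
  by_contra ha
  have hδ : (0:ℝ) < 1 / (|b| + 1) := by positivity
  have h2 := h (-(a * (1 / (|b| + 1))))
  have ha2 : 0 < a ^ 2 := by positivity
  have hb1 : b * (1 / (|b| + 1)) < 1 := by
    rw [mul_one_div, div_lt_one (by positivity)]
    have := le_abs_self b; linarith
  nlinarith [mul_pos ha2 hδ]

private lemma quadForm_smul (M : Matrix (Fin m) (Fin m) ℝ) (c : ℝ) (x : Fin m → ℝ) :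
    (c • x) ⬝ᵥ (M *ᵥ (c • x)) = c ^ 2 * (x ⬝ᵥ (M *ᵥ x)) := by
  rw [Matrix.mulVec_smul, smul_dotProduct, dotProduct_smul]
  simp [smul_eq_mul]; ring

private lemma continuous_quadForm (M : Matrix (Fin m) (Fin m) ℝ) :
    Continuous (fun x : Fin m → ℝ => x ⬝ᵥ (M *ᵥ x)) := by
  have hrw : (fun x : Fin m → ℝ => x ⬝ᵥ (M *ᵥ x))
      = fun x => ∑ i, x i * ∑ j, M i j * x j := by
    funext x; simp [dotProduct, Matrix.mulVec]
  rw [hrw]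
  exact continuous_finset_sum _ fun i _ => (continuous_apply i).mul
    (continuous_finset_sum _ fun j _ => continuous_const.mul (continuous_apply j))

/-- A positive semidefinite real matrix with nonzero determinant is positive definite. -/
private lemma posDef_of_posSemidef_det {M : Matrix (Fin m) (Fin m) ℝ}
    (h : M.PosSemidef) (hdet : M.det ≠ 0) : M.PosDef := by
  refine Matrix.PosDef.of_dotProduct_mulVec_pos h.1 fun x hx => ?_
  rcases (h.dotProduct_mulVec_nonneg x).lt_or_eq with hlt | heq
  · simpa using hlt
  · exfalso
    have hsymm : ∀ a b, M a b = M b a := fun a b => by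
      have h1 := congrFun (congrFun h.1 a) b
      simpa [Matrix.conjTranspose_apply] using h1.symm
    have hMx : M *ᵥ x = 0 := by
      funext j
      show (M *ᵥ x) j = 0
      have hx2 : x ⬝ᵥ (M *ᵥ (Pi.single j 1 : Fin m → ℝ)) = (M *ᵥ x) j := by
        rw [Matrix.mulVec_single]
        have h1 : x ⬝ᵥ (MulOpposite.op (1:ℝ) • M.col j) = ∑ i, x i * M i j := by
          simp [dotProduct]
        have h2 : (M *ᵥ x) j = ∑ i, M j i * x i := by simp [Matrix.mulVec, dotProduct]
        rw [h1, h2]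
        exact Finset.sum_congr rfl fun i _ => by rw [hsymm j i]; ring
      have hx3 : (Pi.single j 1 : Fin m → ℝ) ⬝ᵥ (M *ᵥ x) = (M *ᵥ x) j := by
        rw [single_dotProduct]; ring
      have key : ∀ t : ℝ, 0 ≤ (2 * (M *ᵥ x) j) * t
          + ((Pi.single j 1 : Fin m → ℝ) ⬝ᵥ (M *ᵥ (Pi.single j 1 : Fin m → ℝ))) * t ^ 2 := by
        intro t
        have h3 := h.dotProduct_mulVec_nonneg (x + t • (Pi.single j 1 : Fin m → ℝ))
        rw [star_trivial] at h3
        have h0 : x ⬝ᵥ (M *ᵥ x) = 0 := by simpa using heq.symm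
        have hexp : (x + t • (Pi.single j 1 : Fin m → ℝ)) ⬝ᵥ
            (M *ᵥ (x + t • (Pi.single j 1 : Fin m → ℝ)))
            = (2 * (M *ᵥ x) j) * t
              + ((Pi.single j 1 : Fin m → ℝ) ⬝ᵥ (M *ᵥ (Pi.single j 1 : Fin m → ℝ))) * t ^ 2 := by
          simp only [Matrix.mulVec_add, Matrix.mulVec_smul, add_dotProduct,
            dotProduct_add, smul_dotProduct, dotProduct_smul,
            smul_eq_mul, hx2, hx3, h0]
          ring
        rw [← hexp]
        exact h3
      have := quad_coeff_zero key
      linarith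
    exact hx (Matrix.eq_zero_of_mulVec_eq_zero hdet hMx)




private noncomputable def mu (M : Matrix (Fin m) (Fin m) ℝ) : ℝ :=
  sInf ((fun x => x ⬝ᵥ (M *ᵥ x)) '' Metric.sphere (0 : Fin m → ℝ) 1)

private lemma mu_isLeast [Nonempty (Fin m)] (M : Matrix (Fin m) (Fin m) ℝ) :
    ∃ x : Fin m → ℝ, x ∈ Metric.sphere (0 : Fin m → ℝ) 1 ∧ mu M = x ⬝ᵥ (M *ᵥ x) ∧
      ∀ y ∈ Metric.sphere (0 : Fin m → ℝ) 1, mu M ≤ y ⬝ᵥ (M *ᵥ y) := by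
  have hne : (Metric.sphere (0 : Fin m → ℝ) 1).Nonempty := by
    refine ⟨fun _ => 1, ?_⟩
    simp [mem_sphere_zero_iff_norm]
  obtain ⟨x, hxs, hmin'⟩ := (isCompact_sphere (0 : Fin m → ℝ) 1).exists_isMinOn hne
    (continuous_quadForm M).continuousOn
  have hmin : ∀ y ∈ Metric.sphere (0 : Fin m → ℝ) 1, x ⬝ᵥ (M *ᵥ x) ≤ y ⬝ᵥ (M *ᵥ y) :=
    fun y hy => hmin' hy
  have hleast : IsLeast ((fun y => y ⬝ᵥ (M *ᵥ y)) '' Metric.sphere (0 : Fin m → ℝ) 1)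
      (x ⬝ᵥ (M *ᵥ x)) :=
    ⟨⟨x, hxs, rfl⟩, by rintro _ ⟨y, hy, rfl⟩; exact hmin y hy⟩
  have hmu : mu M = x ⬝ᵥ (M *ᵥ x) := hleast.csInf_eq
  exact ⟨x, hxs, hmu, fun y hy => hmu ▸ hmin y hy⟩

private lemma mu_pos_of_posDef [Nonempty (Fin m)] {M : Matrix (Fin m) (Fin m) ℝ}
    (h : M.PosDef) : 0 < mu M := by
  obtain ⟨x, hxs, hmu, -⟩ := mu_isLeast M
  have hx0 : x ≠ 0 := by
    intro h0
    rw [mem_sphere_zero_iff_norm, h0] at hxs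
    simp at hxs
  have := h.dotProduct_mulVec_pos hx0
  rw [star_trivial] at this
  rw [hmu]; exact this

private lemma posDef_of_mu_pos [Nonempty (Fin m)] {M : Matrix (Fin m) (Fin m) ℝ}
    (hsym : M.IsHermitian) (h : 0 < mu M) : M.PosDef := by
  obtain ⟨-, -, -, hle⟩ := mu_isLeast M
  refine Matrix.PosDef.of_dotProduct_mulVec_pos hsym fun x hx => ?_
  rw [star_trivial]
  have hn : (0:ℝ) < ‖x‖ := norm_pos_iff.mpr hx
  set u : Fin m → ℝ := ‖x‖⁻¹ • x with hu
  have husph : u ∈ Metric.sphere (0 : Fin m → ℝ) 1 := by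
    rw [mem_sphere_zero_iff_norm, hu, norm_smul]
    simp [abs_of_pos (inv_pos.mpr hn), inv_mul_cancel₀ hn.ne']
  have hxu : x = ‖x‖ • u := by
    rw [hu, smul_smul, mul_inv_cancel₀ hn.ne', one_smul]
  have hq : x ⬝ᵥ (M *ᵥ x) = ‖x‖ ^ 2 * (u ⬝ᵥ (M *ᵥ u)) := by
    conv_lhs => rw [hxu]
    rw [Matrix.mulVec_smul, smul_dotProduct, dotProduct_smul]
    simp [smul_eq_mul]; ring
  rw [hq]
  have := hle u husph
  have h2 : 0 < u ⬝ᵥ (M *ᵥ u) := lt_of_lt_of_le h this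
  positivity

private lemma posSemidef_of_mu_nonneg [Nonempty (Fin m)] {M : Matrix (Fin m) (Fin m) ℝ}
    (hsym : M.IsHermitian) (h : 0 ≤ mu M) : M.PosSemidef := by
  obtain ⟨-, -, -, hle⟩ := mu_isLeast M
  refine Matrix.PosSemidef.of_dotProduct_mulVec_nonneg hsym fun x => ?_
  rw [star_trivial]
  rcases eq_or_ne x 0 with rfl | hx
  · simp
  have hn : (0:ℝ) < ‖x‖ := norm_pos_iff.mpr hx
  set u : Fin m → ℝ := ‖x‖⁻¹ • x with hu
  have husph : u ∈ Metric.sphere (0 : Fin m → ℝ) 1 := by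
    rw [mem_sphere_zero_iff_norm, hu, norm_smul]
    simp [abs_of_pos (inv_pos.mpr hn), inv_mul_cancel₀ hn.ne']
  have hxu : x = ‖x‖ • u := by
    rw [hu, smul_smul, mul_inv_cancel₀ hn.ne', one_smul]
  have hq : x ⬝ᵥ (M *ᵥ x) = ‖x‖ ^ 2 * (u ⬝ᵥ (M *ᵥ u)) := by
    conv_lhs => rw [hxu]
    rw [Matrix.mulVec_smul, smul_dotProduct, dotProduct_smul]
    simp [smul_eq_mul]; ring
  rw [hq]
  have h2 : 0 ≤ u ⬝ᵥ (M *ᵥ u) := le_trans h (hle u husph)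
  positivity

private lemma quad_diff_le (A B : Matrix (Fin m) (Fin m) ℝ) {x : Fin m → ℝ} (hx : ‖x‖ ≤ 1) :
    |x ⬝ᵥ (A *ᵥ x) - x ⬝ᵥ (B *ᵥ x)| ≤ ∑ i, ∑ j, |A i j - B i j| := by
  have hq : x ⬝ᵥ (A *ᵥ x) - x ⬝ᵥ (B *ᵥ x) = ∑ i, ∑ j, x i * ((A i j - B i j) * x j) := by
    rw [dotProduct, dotProduct, ← Finset.sum_sub_distrib]
    refine Finset.sum_congr rfl fun i _ => ?_
    have hrow : (A *ᵥ x) i - (B *ᵥ x) i = ∑ j, (A i j - B i j) * x j := by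
      simp [Matrix.mulVec, dotProduct, ← Finset.sum_sub_distrib, sub_mul]
    calc x i * (A *ᵥ x) i - x i * (B *ᵥ x) i
        = x i * ((A *ᵥ x) i - (B *ᵥ x) i) := by ring
      _ = x i * ∑ j, (A i j - B i j) * x j := by rw [hrow]
      _ = ∑ j, x i * ((A i j - B i j) * x j) := Finset.mul_sum _ _ _
  rw [hq]
  refine (Finset.abs_sum_le_sum_abs _ _).trans ?_
  refine Finset.sum_le_sum fun i _ => (Finset.abs_sum_le_sum_abs _ _).trans ?_
  refine Finset.sum_le_sum fun j _ => ?_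
  rw [abs_mul, abs_mul]
  have hxi : |x i| ≤ 1 := by
    have := norm_le_pi_norm x i
    rw [Real.norm_eq_abs] at this
    linarith
  have hxj : |x j| ≤ 1 := by
    have := norm_le_pi_norm x j
    rw [Real.norm_eq_abs] at this
    linarith
  have hb : |x i| * (|A i j - B i j| * |x j|) ≤ 1 * (|A i j - B i j| * 1) := by
    gcongr
  linarith

private lemma abs_mu_sub_le [Nonempty (Fin m)] (A B : Matrix (Fin m) (Fin m) ℝ) :
    |mu A - mu B| ≤ ∑ i, ∑ j, |A i j - B i j| := by
  obtain ⟨xa, hxa, hma, hla⟩ := mu_isLeast A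
  obtain ⟨xb, hxb, hmb, hlb⟩ := mu_isLeast B
  have hnb : ‖xb‖ ≤ 1 := le_of_eq (mem_sphere_zero_iff_norm.mp hxb)
  have hna : ‖xa‖ ≤ 1 := le_of_eq (mem_sphere_zero_iff_norm.mp hxa)
  rw [abs_sub_le_iff]
  constructor
  · have h1 := quad_diff_le A B hnb
    have h2 := le_abs_self (xb ⬝ᵥ (A *ᵥ xb) - xb ⬝ᵥ (B *ᵥ xb))
    have h3 := hla xb hxb
    rw [hmb]
    linarith
  · have h1 := quad_diff_le B A hna
    have h2 := le_abs_self (xa ⬝ᵥ (B *ᵥ xa) - xa ⬝ᵥ (A *ᵥ xa))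
    have h3 := hlb xa hxa
    rw [hma]
    have h4 : ∑ i, ∑ j, |B i j - A i j| = ∑ i, ∑ j, |A i j - B i j| := by
      refine Finset.sum_congr rfl fun i _ => Finset.sum_congr rfl fun j _ => abs_sub_comm _ _
    linarith


private lemma ode_zero {g c : ℝ → ℝ} {a b t' : ℝ}
    (hab : a ≤ b)
    (hg : ∀ t ∈ Set.Icc a b, HasDerivAt g (c t * g t) t)
    (hc : ContinuousOn c (Set.Icc a b))
    (ht' : t' ∈ Set.Icc a b) (hz : g t' = 0) :
    ∀ t ∈ Set.Icc a b, g t = 0 := by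
  obtain ⟨C, hC⟩ := (isCompact_Icc (a := a) (b := b)).exists_bound_of_continuousOn hc
  set K : NNReal := ⟨max C 0, le_max_right _ _⟩ with hK
  set cc : ℝ → ℝ := fun t => c (max a (min b t)) with hcc
  set v : ℝ → ℝ → ℝ := fun t x => cc t * x with hv
  have hclamp : ∀ t, max a (min b t) ∈ Set.Icc a b := fun t =>
    ⟨le_max_left _ _, max_le hab (min_le_left _ _)⟩
  have hcct : ∀ t ∈ Set.Icc a b, cc t = c t := by
    intro t ht
    rw [hcc]
    simp only
    rw [min_eq_right ht.2, max_eq_right ht.1]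
  have hlip : ∀ t, LipschitzOnWith K (v t) Set.univ := by
    intro t
    refine LipschitzWith.lipschitzOnWith ?_
    refine LipschitzWith.of_dist_le_mul fun x y => ?_
    rw [Real.dist_eq, Real.dist_eq]
    have : v t x - v t y = cc t * (x - y) := by rw [hv]; ring
    rw [this, abs_mul]
    have h1 : |cc t| ≤ (K : ℝ) := by
      have := hC _ (hclamp t)
      rw [Real.norm_eq_abs] at this
      exact this.trans (le_max_left _ _)
    exact mul_le_mul_of_nonneg_right h1 (abs_nonneg _)
  have hgcont : ContinuousOn g (Set.Icc a b) :=
    fun t ht => ((hg t ht).continuousAt).continuousWithinAt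
  -- left of t'
  have hleft : ∀ t ∈ Set.Icc a t', g t = 0 := by
    have key : Set.EqOn g (fun _ => (0:ℝ)) (Set.Icc a t') := by
      refine ODE_solution_unique_of_mem_Icc_left (v := v) (s := fun _ => Set.univ) (fun t _ => hlip t)
        (hgcont.mono (Set.Icc_subset_Icc_right ht'.2)) ?_ (fun _ _ => trivial)
        continuousOn_const ?_ (fun _ _ => trivial) (by simpa using hz)
      · intro t ht
        have htab : t ∈ Set.Icc a b := ⟨le_of_lt ht.1, ht.2.trans ht'.2⟩
        have := (hg t htab).hasDerivWithinAt (s := Set.Iic t)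
        have hveq : v t (g t) = c t * g t := by rw [hv]; simp only; rw [hcct t htab]
        rw [hveq]
        exact this
      · intro t ht
        have hveq : v t 0 = 0 := by rw [hv]; simp
        rw [hveq]
        exact hasDerivWithinAt_const _ _ _
    intro t ht
    exact key ht
  have hright : ∀ t ∈ Set.Icc t' b, g t = 0 := by
    have key : Set.EqOn g (fun _ => (0:ℝ)) (Set.Icc t' b) := by
      refine ODE_solution_unique_of_mem_Icc_right (v := v) (s := fun _ => Set.univ) (fun t _ => hlip t)
        (hgcont.mono (Set.Icc_subset_Icc_left ht'.1)) ?_ (fun _ _ => trivial)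
        continuousOn_const ?_ (fun _ _ => trivial) (by simpa using hz)
      · intro t ht
        have htab : t ∈ Set.Icc a b := ⟨ht'.1.trans ht.1, le_of_lt ht.2⟩
        have := (hg t htab).hasDerivWithinAt (s := Set.Ici t)
        have hveq : v t (g t) = c t * g t := by rw [hv]; simp only; rw [hcct t htab]
        rw [hveq]
        exact this
      · intro t ht
        have hveq : v t 0 = 0 := by rw [hv]; simp
        rw [hveq]
        exact hasDerivWithinAt_const _ _ _
    intro t ht
    exact key ht
  intro t ht
  rcases le_total t t' with h | h
  · exact hleft t ⟨ht.1, h⟩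
  · exact hright t ⟨h, ht.2⟩

/-- For a `C¹` family of complex symmetric matrices solving the matrix Riccati equation
`Ḣ + H² = F` with `F` real symmetric and `Im H(t₀)` positive definite, `Im H(t)` is
positive definite for all `t ∈ I`. -/
theorem stmt8 (m : ℕ) (I : Set ℝ) (hI : I.OrdConnected)
    (H H' : ℝ → Matrix (Fin m) (Fin m) ℂ)
    (F : ℝ → Matrix (Fin m) (Fin m) ℝ)
    (hderiv : ∀ t ∈ I, ∀ i j, HasDerivAt (fun s => H s i j) (H' t i j) t)
    (hcont : ∀ i j, ContinuousOn (fun s => H' s i j) I)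
    (hric : ∀ t ∈ I, H' t + H t * H t = (F t).map (fun a => (a : ℂ)))
    (hFsymm : ∀ t ∈ I, (F t).IsSymm)
    (hHsymm : ∀ t ∈ I, (H t).IsSymm)
    (t₀ : ℝ) (ht₀ : t₀ ∈ I)
    (hpos : ((H t₀).map Complex.im).PosDef) :
    ∀ t ∈ I, ((H t).map Complex.im).PosDef := by
  classical
  rcases Nat.eq_zero_or_pos m with hm | hm
  · haveI : IsEmpty (Fin m) := by rw [hm]; infer_instance
    intro t _
    exact Matrix.PosDef.of_dotProduct_mulVec_pos (Matrix.ext fun i _ => isEmptyElim i)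
      fun x hx => absurd (funext fun i => isEmptyElim i) hx
  haveI : Nonempty (Fin m) := ⟨⟨0, hm⟩⟩
  set Y : ℝ → Matrix (Fin m) (Fin m) ℝ := fun t => (H t).map Complex.im with hYdef
  set X : ℝ → Matrix (Fin m) (Fin m) ℝ := fun t => (H t).map Complex.re with hXdef
  -- Hermitian-ness of Y
  have hYherm : ∀ t ∈ I, (Y t).IsHermitian := by
    intro t ht
    show (Y t)ᴴ = Y t
    ext i j
    rw [Matrix.conjTranspose_apply, star_trivial]
    have h2 := congrFun (congrFun (hHsymm t ht) i) j
    rw [Matrix.transpose_apply] at h2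
    show (Y t) j i = (Y t) i j
    simp only [hYdef, Matrix.map_apply]
    rw [h2]
  -- derivatives of the entries of Y
  have hYd : ∀ t ∈ I, ∀ i j,
      HasDerivAt (fun s => Y s i j) ((-(X t * Y t + Y t * X t)) i j) t := by
    intro t ht i j
    have h1 := hderiv t ht i j
    have h2 : HasDerivAt (fun s => (H s i j).im) ((H' t i j).im) t :=
      Complex.imCLM.hasFDerivAt.comp_hasDerivAt t h1
    have h3 : (H' t i j).im = (-(X t * Y t + Y t * X t)) i j := by
      have h4 : H' t = (F t).map (fun a => (a:ℂ)) - H t * H t :=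
        eq_sub_of_add_eq (hric t ht)
      rw [h4]
      simp only [Matrix.sub_apply, Matrix.map_apply, Complex.sub_im, Complex.ofReal_im,
        Matrix.neg_apply, Matrix.add_apply, Matrix.mul_apply]
      have h5 : (∑ k, H t i k * H t k j).im
          = ∑ k, ((H t i k).re * (H t k j).im + (H t i k).im * (H t k j).re) := by
        rw [Complex.im_sum]
        exact Finset.sum_congr rfl fun k _ => Complex.mul_im _ _
      rw [h5, Finset.sum_add_distrib]
      simp only [hXdef, hYdef, Matrix.map_apply]
      ring
    have h6 : (fun s => Y s i j) = fun s => (H s i j).im := by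
      funext s; simp [hYdef, Matrix.map_apply]
    rw [h6, ← h3]
    exact h2
  -- continuity of entries
  have hHcont : ∀ i j, ContinuousOn (fun s => H s i j) I :=
    fun i j t ht => ((hderiv t ht i j).continuousAt).continuousWithinAt
  have hYcont : ∀ i j, ContinuousOn (fun s => Y s i j) I := by
    intro i j
    have h6 : (fun s => Y s i j) = fun s => (H s i j).im := by
      funext s; simp [hYdef, Matrix.map_apply]
    rw [h6]
    exact Complex.continuous_im.comp_continuousOn (hHcont i j)
  have hXcont : ∀ i j, ContinuousOn (fun s => X s i j) I := by
    intro i j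
    have h6 : (fun s => X s i j) = fun s => (H s i j).re := by
      funext s; simp [hXdef, Matrix.map_apply]
    rw [h6]
    exact Complex.continuous_re.comp_continuousOn (hHcont i j)
  -- the determinant ODE
  have hgd : ∀ t ∈ I, HasDerivAt (fun s => (Y s).det)
      (((-2) * (X t).trace) * (Y t).det) t := by
    intro t ht
    have hJ := hasDerivAt_det Y (-(X t * Y t + Y t * X t)) t (hYd t ht)
    have htr : ((-(X t * Y t + Y t * X t)) * (Y t).adjugate).trace
        = ((-2) * (X t).trace) * (Y t).det := by
      rw [Matrix.neg_mul, Matrix.add_mul, Matrix.trace_neg, Matrix.trace_add]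
      rw [Matrix.mul_assoc (X t), Matrix.mul_adjugate]
      rw [Matrix.trace_mul_comm (Y t * X t)]
      rw [← Matrix.mul_assoc, Matrix.adjugate_mul]
      rw [mul_smul_comm, smul_mul_assoc]
      simp only [Matrix.trace_smul, Matrix.mul_one, Matrix.one_mul, smul_eq_mul]
      ring
    rw [← htr]
    exact hJ
  have hccont : ContinuousOn (fun t => (-2) * (X t).trace) I := by
    have htr : ContinuousOn (fun t => (X t).trace) I := by
      have h6 : (fun t => (X t).trace) = fun t => ∑ i, X t i i := by
        funext t; simp [Matrix.trace, Matrix.diag]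
      rw [h6]
      intro t ht
      exact tendsto_finset_sum _ fun i _ => hXcont i i t ht
    exact continuousOn_const.mul htr
  have hdet0 : 0 < (Y t₀).det := hpos.det_pos
  -- nonvanishing of det Y on I
  have hgne : ∀ t ∈ I, (Y t).det ≠ 0 := by
    intro t₁ ht₁ h0
    rcases le_total t₀ t₁ with hle | hle
    · have hsub : Set.Icc t₀ t₁ ⊆ I := hI.out ht₀ ht₁
      have hz := ode_zero hle (fun t ht => hgd t (hsub ht)) (hccont.mono hsub)
        (Set.right_mem_Icc.mpr hle) h0
      exact hdet0.ne' (hz t₀ (Set.left_mem_Icc.mpr hle))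
    · have hsub : Set.Icc t₁ t₀ ⊆ I := hI.out ht₁ ht₀
      have hz := ode_zero hle (fun t ht => hgd t (hsub ht)) (hccont.mono hsub)
        (Set.left_mem_Icc.mpr hle) h0
      exact hdet0.ne' (hz t₀ (Set.right_mem_Icc.mpr hle))
  -- continuity of the minimum of the quadratic form on the unit sphere
  have hμcont : ContinuousOn (fun t => mu (Y t)) I := by
    intro t₁ ht₁
    have hN : Filter.Tendsto (fun s => ∑ i, ∑ j, |Y s i j - Y t₁ i j|)
        (nhdsWithin t₁ I) (nhds 0) := by
      have h7 : Filter.Tendsto (fun s => ∑ i, ∑ j, |Y s i j - Y t₁ i j|)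
          (nhdsWithin t₁ I) (nhds (∑ i : Fin m, ∑ j : Fin m, |Y t₁ i j - Y t₁ i j|)) := by
        refine tendsto_finset_sum _ fun i _ => ?_
        refine tendsto_finset_sum _ fun j _ => ?_
        exact ((hYcont i j t₁ ht₁).sub
          (continuousWithinAt_const (b := Y t₁ i j))).abs
      simpa using h7
    rw [ContinuousWithinAt, tendsto_iff_dist_tendsto_zero]
    refine squeeze_zero (fun s => dist_nonneg) (fun s => ?_) hN
    rw [Real.dist_eq]
    exact abs_mu_sub_le _ _
  -- positivity of mu on I
  have hμpos : ∀ t ∈ I, 0 < mu (Y t) := by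
    have hnz : ∀ t ∈ I, mu (Y t) ≠ 0 := by
      intro t ht h0
      have hsd : (Y t).PosSemidef := posSemidef_of_mu_nonneg (hYherm t ht) (le_of_eq h0.symm)
      have hpd : (Y t).PosDef := posDef_of_posSemidef_det hsd (hgne t ht)
      exact (mu_pos_of_posDef hpd).ne' h0
    intro t₁ ht₁
    by_contra hle
    push_neg at hle
    have hlt : mu (Y t₁) < 0 := lt_of_le_of_ne hle (hnz t₁ ht₁)
    have hpos0 : 0 < mu (Y t₀) := mu_pos_of_posDef hpos
    have hsub : Set.uIcc t₀ t₁ ⊆ I := hI.uIcc_subset ht₀ ht₁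
    have hivt := intermediate_value_uIcc (hμcont.mono hsub)
    have h0mem : (0:ℝ) ∈ Set.uIcc (mu (Y t₀)) (mu (Y t₁)) :=
      Set.mem_uIcc.mpr (Or.inr ⟨hlt.le, hpos0.le⟩)
    obtain ⟨s, hs, hs0⟩ := hivt h0mem
    exact hnz s (hsub hs) hs0
  intro t ht
  exact posDef_of_mu_pos (hYherm t ht) (hμpos t ht)
end
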